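/- Define a sequence of positive integers by q₁ = 10^{1!}, q₂ = 10^{2!}·10^{1!} + 1, and q_n = 10^{n!}·q_{n−1} + q_{n−2} for n ≥ 3. Then for every real s ≥ 1 and every ε > 0 there exists N ∈ ℕ such that q_n^{n+3} ≤ e^{ε·q_{n−1}^{1/s}} for all n ≥ N. In particular, the sequences n·(n!)·(10^{(n−1)!/s})^{−1} and (n!)·(10^{(n−1)!/s})^{−1} tend to 0 as n → ∞. -/
import Mathlib

open Filter Real

private lemma aux16_self_le : ∀ n : ℕ, 4 ≤ n → n ≤ (n - 1).factorial := by
  intro n hn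
  induction n with
  | zero => omega
  | succ k ih =>
    rcases Nat.lt_or_ge k 4 with h | h
    · interval_cases k <;> simp [Nat.factorial] <;> omega
    · have hk := ih (by omega)
      have hk1 : 1 ≤ k - 1 := by omega
      have hfe : k.factorial = k * (k - 1).factorial := by
        conv_lhs => rw [show k = (k - 1) + 1 by omega]
        rw [Nat.factorial_succ]
        congr 1
        omega
      have hpos : 1 ≤ (k - 1).factorial := Nat.one_le_iff_ne_zero.mpr (Nat.factorial_ne_zero _)
      have : k + 1 ≤ k * (k - 1).factorial := by nlinarith
      simpa [Nat.add_sub_cancel, hfe] using this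

/-- Growth estimate for the denominators of the convergents of
`α = [10^{1!}, 10^{2!}, 10^{3!}, …]`: for every `s ≥ 1` and `ε > 0`, eventually
`q_n^{n+3} ≤ e^{ε q_{n-1}^{1/s}}`; in particular
`n·n!/10^{(n-1)!/s} → 0` and `n!/10^{(n-1)!/s} → 0`. -/
theorem stmt_16 (q : ℕ → ℕ)
    (hq1 : q 1 = 10 ^ (Nat.factorial 1))
    (hq2 : q 2 = 10 ^ (Nat.factorial 2) * 10 ^ (Nat.factorial 1) + 1)
    (hqrec : ∀ n, 3 ≤ n → q n = 10 ^ (Nat.factorial n) * q (n - 1) + q (n - 2)) :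
    ∀ s : ℝ, 1 ≤ s →
      (∀ ε : ℝ, 0 < ε → ∃ N : ℕ, ∀ n, N ≤ n →
        ((q n : ℝ)) ^ (n + 3) ≤ Real.exp (ε * (q (n - 1) : ℝ) ^ (1 / s))) ∧
      Filter.Tendsto (fun n : ℕ => (n : ℝ) * (Nat.factorial n : ℝ) /
        (10 : ℝ) ^ ((Nat.factorial (n - 1) : ℝ) / s)) Filter.atTop (nhds 0) ∧
      Filter.Tendsto (fun n : ℕ => (Nat.factorial n : ℝ) /
        (10 : ℝ) ^ ((Nat.factorial (n - 1) : ℝ) / s)) Filter.atTop (nhds 0) := by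
  -- lower bound : 10 ^ n! ≤ q n for n ≥ 1
  have hlow : ∀ n, 1 ≤ n → 10 ^ n.factorial ≤ q n := by
    intro n
    induction n using Nat.strong_induction_on with
    | _ n ih =>
      intro hn
      match n, hn with
      | 1, _ => rw [hq1]
      | 2, _ => rw [hq2]; norm_num [Nat.factorial]
      | (m + 3), _ =>
        rw [hqrec (m + 3) (by omega)]
        have h1 : 10 ^ (m + 2).factorial ≤ q (m + 3 - 1) := by
          have := ih (m + 2) (by omega) (by omega)
          simpa using this
        have h1' : 1 ≤ q (m + 3 - 1) := le_trans (Nat.one_le_pow _ _ (by norm_num)) h1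
        calc 10 ^ (m + 3).factorial = 10 ^ (m + 3).factorial * 1 := by ring
          _ ≤ 10 ^ (m + 3).factorial * q (m + 3 - 1) := by
              exact Nat.mul_le_mul_left _ h1'
          _ ≤ 10 ^ (m + 3).factorial * q (m + 3 - 1) + q (m + 3 - 2) := Nat.le_add_right _ _
  -- upper bound : q n ≤ 10 ^ (2 n!) for n ≥ 1
  have hub : ∀ n, 1 ≤ n → q n ≤ 10 ^ (2 * n.factorial) := by
    intro n
    induction n using Nat.strong_induction_on with
    | _ n ih =>
      intro hn
      match n, hn with
      | 1, _ => rw [hq1]; norm_num [Nat.factorial]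
      | 2, _ => rw [hq2]; norm_num [Nat.factorial]
      | (m + 3), _ =>
        rw [hqrec (m + 3) (by omega)]
        have h1 : q (m + 3 - 1) ≤ 10 ^ (2 * (m + 2).factorial) := by
          have := ih (m + 2) (by omega) (by omega); simpa using this
        have h2 : q (m + 3 - 2) ≤ 10 ^ (2 * (m + 1).factorial) := by
          have := ih (m + 1) (by omega) (by omega); simpa using this
        have hfa : (m + 3).factorial = (m + 3) * (m + 2).factorial := Nat.factorial_succ _
        have hfb : (m + 2).factorial = (m + 2) * (m + 1).factorial := Nat.factorial_succ _
        have hpos : 1 ≤ (m + 2).factorial := Nat.one_le_iff_ne_zero.mpr (Nat.factorial_ne_zero _)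
        have hpos1 : 1 ≤ (m + 1).factorial := Nat.one_le_iff_ne_zero.mpr (Nat.factorial_ne_zero _)
        have e1 : (m + 3).factorial + 2 * (m + 2).factorial = (m + 5) * (m + 2).factorial := by
          rw [hfa]; ring
        have e2 : 2 * (m + 1).factorial ≤ (m + 5) * (m + 2).factorial := by
          rw [hfb]; nlinarith
        have e3 : (m + 5) * (m + 2).factorial + 1 ≤ 2 * (m + 3).factorial := by
          rw [hfa]; nlinarith
        calc 10 ^ (m + 3).factorial * q (m + 3 - 1) + q (m + 3 - 2)
            ≤ 10 ^ (m + 3).factorial * 10 ^ (2 * (m + 2).factorial)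
              + 10 ^ (2 * (m + 1).factorial) := by
              gcongr
          _ = 10 ^ ((m + 5) * (m + 2).factorial) + 10 ^ (2 * (m + 1).factorial) := by
              rw [← pow_add, e1]
          _ ≤ 10 ^ ((m + 5) * (m + 2).factorial) + 10 ^ ((m + 5) * (m + 2).factorial) := by
              gcongr <;> norm_num
          _ = 2 * 10 ^ ((m + 5) * (m + 2).factorial) := by ring
          _ ≤ 10 * 10 ^ ((m + 5) * (m + 2).factorial) := by
              gcongr <;> norm_num
          _ = 10 ^ ((m + 5) * (m + 2).factorial + 1) := by rw [pow_succ]; ring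
          _ ≤ 10 ^ (2 * (m + 3).factorial) := by
              exact Nat.pow_le_pow_right (by norm_num) e3
  intro s hs
  have hs0 : 0 < s := lt_of_lt_of_le one_pos hs
  have hsinv : 0 < 1 / s := by positivity
  set c : ℝ := (10 : ℝ) ^ (1 / s) with hc
  have hc1 : 1 < c := by
    rw [hc]
    rw [Real.one_lt_rpow_iff_of_pos (by norm_num)]
    left; exact ⟨by norm_num, hsinv⟩
  have hc0 : (0 : ℝ) < c := lt_trans one_pos hc1
  -- key identity : 10 ^ (m / s) = c ^ m
  have hid : ∀ m : ℕ, (10 : ℝ) ^ ((m : ℝ) / s) = c ^ m := by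
    intro m
    rw [div_eq_mul_one_div, mul_comm, Real.rpow_mul (by norm_num), Real.rpow_natCast]
  -- the main tendsto fact
  have hmfac : Tendsto (fun n : ℕ => (n - 1).factorial) atTop atTop := by
    refine tendsto_atTop_mono (fun n => Nat.self_le_factorial _) ?_
    exact Filter.tendsto_sub_atTop_nat 1
  have hT : Tendsto (fun n : ℕ => (n : ℝ) * (n.factorial : ℝ) / c ^ (n - 1).factorial)
      atTop (nhds 0) := by
    have h3 : Tendsto (fun k : ℕ => (k : ℝ) ^ 3 / c ^ k) atTop (nhds 0) :=
      tendsto_pow_const_div_const_pow_of_one_lt 3 hc1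
    have hcomp := h3.comp hmfac
    refine squeeze_zero' ?_ ?_ hcomp
    · filter_upwards with n
      positivity
    · filter_upwards [eventually_ge_atTop 4] with n hn
      have hle : n ≤ (n - 1).factorial := aux16_self_le n hn
      have hfe : (n.factorial : ℝ) = (n : ℝ) * ((n - 1).factorial : ℝ) := by
        have : n.factorial = n * (n - 1).factorial := by
          conv_lhs => rw [show n = (n - 1) + 1 by omega]
          rw [Nat.factorial_succ]
          congr 2
          omega
        exact_mod_cast this
      have hleR : (n : ℝ) ≤ ((n - 1).factorial : ℝ) := by exact_mod_cast hle
      have hn0 : (0 : ℝ) ≤ (n : ℝ) := by positivity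
      have hnum : (n : ℝ) * (n.factorial : ℝ) ≤ ((n - 1).factorial : ℝ) ^ 3 := by
        rw [hfe]
        have hf0 : (0 : ℝ) ≤ ((n - 1).factorial : ℝ) := by positivity
        have h2 : (n : ℝ) * (n : ℝ) ≤ ((n - 1).factorial : ℝ) * ((n - 1).factorial : ℝ) :=
          mul_le_mul hleR hleR hn0 hf0
        calc (n : ℝ) * ((n : ℝ) * ((n - 1).factorial : ℝ))
            = ((n : ℝ) * (n : ℝ)) * ((n - 1).factorial : ℝ) := by ring
          _ ≤ (((n - 1).factorial : ℝ) * ((n - 1).factorial : ℝ)) * ((n - 1).factorial : ℝ) :=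
              mul_le_mul_of_nonneg_right h2 hf0
          _ = ((n - 1).factorial : ℝ) ^ 3 := by ring
      simp only [Function.comp]
      gcongr
  have hT2 : Tendsto (fun n : ℕ => (n : ℝ) * (Nat.factorial n : ℝ) /
      (10 : ℝ) ^ ((Nat.factorial (n - 1) : ℝ) / s)) atTop (nhds 0) := by
    simpa only [hid] using hT
  refine ⟨?_, hT2, ?_⟩
  · -- main eventual inequality
    intro ε hε
    have h0 : Tendsto (fun n : ℕ =>
        8 * Real.log 10 * ((n : ℝ) * (n.factorial : ℝ) / c ^ (n - 1).factorial))
        atTop (nhds 0) := by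
      simpa using hT.const_mul (8 * Real.log 10)
    obtain ⟨N, hN⟩ := eventually_atTop.mp
      ((h0.eventually (gt_mem_nhds hε)).and (eventually_ge_atTop 3))
    refine ⟨N, fun n hn => ?_⟩
    obtain ⟨hsmall, hn3⟩ := hN n hn
    set m := (n - 1).factorial with hm
    have hcm : (0 : ℝ) < c ^ m := pow_pos hc0 m
    have hlog : (0 : ℝ) < Real.log 10 := Real.log_pos (by norm_num)
    -- 8 log 10 · n · n! < ε c^m
    have h1' : 8 * Real.log 10 * ((n : ℝ) * (n.factorial : ℝ)) / c ^ m < ε := by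
      rw [mul_div_assoc]
      exact hsmall
    have h1 : 8 * Real.log 10 * ((n : ℝ) * (n.factorial : ℝ)) < ε * c ^ m :=
      (div_lt_iff₀ hcm).mp h1'
    have hnR : (3 : ℝ) ≤ (n : ℝ) := by exact_mod_cast hn3
    have hfpos : (0 : ℝ) ≤ (n.factorial : ℝ) := by positivity
    have key : (2 * n.factorial * (n + 3) : ℝ) * Real.log 10 ≤ ε * c ^ m := by
      have hA : (2 * (n.factorial : ℝ) * ((n : ℝ) + 3)) ≤ 8 * ((n : ℝ) * (n.factorial : ℝ)) := by
        nlinarith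
      calc (2 * (n.factorial : ℝ) * ((n : ℝ) + 3)) * Real.log 10
          ≤ (8 * ((n : ℝ) * (n.factorial : ℝ))) * Real.log 10 :=
            mul_le_mul_of_nonneg_right hA hlog.le
        _ = 8 * Real.log 10 * ((n : ℝ) * (n.factorial : ℝ)) := by ring
        _ ≤ ε * c ^ m := h1.le
    -- c ^ m ≤ (q (n-1)) ^ (1/s)
    have hqlow : ((10 : ℝ) ^ m) ≤ (q (n - 1) : ℝ) := by
      have := hlow (n - 1) (by omega)
      exact_mod_cast this
    have hcmq : c ^ m ≤ (q (n - 1) : ℝ) ^ (1 / s) := by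
      have hcalc : c ^ m = ((10 : ℝ) ^ m) ^ (1 / s) := by
        rw [← Real.rpow_natCast c m, hc, ← Real.rpow_mul (by norm_num),
          mul_comm (1 / s) (m : ℝ), Real.rpow_mul (by norm_num : (0:ℝ) ≤ 10),
          Real.rpow_natCast]
      rw [hcalc]
      exact Real.rpow_le_rpow (by positivity) hqlow (le_of_lt hsinv)
    have hqub : (q n : ℝ) ≤ (10 : ℝ) ^ (2 * n.factorial) := by
      have := hub n (by omega)
      exact_mod_cast this
    calc (q n : ℝ) ^ (n + 3)
        ≤ ((10 : ℝ) ^ (2 * n.factorial)) ^ (n + 3) :=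
          pow_le_pow_left₀ (by positivity) hqub _
      _ = (10 : ℝ) ^ (2 * n.factorial * (n + 3)) := by rw [← pow_mul]
      _ = Real.exp ((2 * n.factorial * (n + 3) : ℕ) * Real.log 10) := by
          rw [Real.exp_nat_mul, Real.exp_log (by norm_num : (0:ℝ) < 10)]
      _ ≤ Real.exp (ε * (q (n - 1) : ℝ) ^ (1 / s)) := by
          rw [Real.exp_le_exp]
          have hcast : ((2 * n.factorial * (n + 3) : ℕ) : ℝ)
              = (2 * n.factorial * (n + 3) : ℝ) := by push_cast; ring
          rw [hcast]
          calc (2 * n.factorial * (n + 3) : ℝ) * Real.log 10 ≤ ε * c ^ m := key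
            _ ≤ ε * (q (n - 1) : ℝ) ^ (1 / s) := by
                exact mul_le_mul_of_nonneg_left hcmq (le_of_lt hε)
  · -- last tendsto via squeeze by hT2
    refine squeeze_zero' ?_ ?_ hT2
    · filter_upwards with n
      positivity
    · filter_upwards [eventually_ge_atTop 1] with n hn
      have h1 : (1 : ℝ) ≤ (n : ℝ) := by exact_mod_cast hn
      have hD : (0 : ℝ) < (10 : ℝ) ^ ((Nat.factorial (n - 1) : ℝ) / s) :=
        Real.rpow_pos_of_pos (by norm_num) _
      gcongr
      exact le_mul_of_one_le_left (by positivity) h1
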